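/- Let D ≥ 1 be an integer and let μ, ν be monotone probability measures on ℝ_+^D. Then μ = ν if and only if for every d ∈ {1,…,D}, the d-th marginal of μ equals the d-th marginal of ν (the marginal being the pushforward under the coordinate map x ↦ x_d). -/

import Mathlib

open MeasureTheory

/-- The nonnegative orthant `ℝ_+^D` in `ℝ^D`. -/
def orthant (D : ℕ) : Set (EuclideanSpace ℝ (Fin D)) := {x | ∀ i, 0 ≤ x i}

/-- A probability measure `μ` on `ℝ_+^D` is monotone if it is the law of `q(U)` for some
increasing map `q : [0,1) → ℝ_+^D`, with `U` uniform on `[0,1)`.  (Such a `q` is automatically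
almost-everywhere measurable.) -/
def IsMonotoneMeasure (D : ℕ) (μ : Measure (EuclideanSpace ℝ (Fin D))) : Prop :=
  ∃ q : ℝ → EuclideanSpace ℝ (Fin D),
    AEMeasurable q (volume.restrict (Set.Ico (0 : ℝ) 1)) ∧
    (∀ s : ℝ, 0 ≤ s → s < 1 → q s ∈ orthant D) ∧
    (∀ s t : ℝ, 0 ≤ s → s ≤ t → t < 1 → ∀ i, q s i ≤ q t i) ∧
    μ = Measure.map q (volume.restrict (Set.Ico (0 : ℝ) 1))

lemma key_le (q r : ℝ → ℝ)
    (hq : ∀ s t : ℝ, 0 ≤ s → s ≤ t → t < 1 → q s ≤ q t)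
    (hr : ∀ s t : ℝ, 0 ≤ s → s ≤ t → t < 1 → r s ≤ r t)
    (hF : ∀ x : ℝ, volume ({s | q s ≤ x} ∩ Set.Ico (0:ℝ) 1)
        = volume ({s | r s ≤ x} ∩ Set.Ico (0:ℝ) 1))
    {t t' : ℝ} (ht : 0 ≤ t) (htt' : t < t') (ht' : t' < 1) :
    q t ≤ r t' := by
  by_contra h
  push_neg at h
  have hA : Set.Icc (0:ℝ) t' ⊆ {s | r s ≤ r t'} ∩ Set.Ico (0:ℝ) 1 := by
    intro s hs
    exact ⟨hr s t' hs.1 hs.2 ht', hs.1, lt_of_le_of_lt hs.2 ht'⟩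
  have hB : {s | q s ≤ r t'} ∩ Set.Ico (0:ℝ) 1 ⊆ Set.Ico (0:ℝ) t := by
    rintro s ⟨hs1, hs2, hs3⟩
    refine ⟨hs2, ?_⟩
    by_contra hst
    push_neg at hst
    exact absurd (le_trans (hq t s ht hst hs3) hs1) (not_le.2 h)
  have h1 : ENNReal.ofReal t' ≤ volume ({s | r s ≤ r t'} ∩ Set.Ico (0:ℝ) 1) := by
    calc ENNReal.ofReal t' = volume (Set.Icc (0:ℝ) t') := by
          rw [Real.volume_Icc]; ring_nf
      _ ≤ _ := measure_mono hA
  have h2 : volume ({s | q s ≤ r t'} ∩ Set.Ico (0:ℝ) 1) ≤ ENNReal.ofReal t := by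
    calc volume ({s | q s ≤ r t'} ∩ Set.Ico (0:ℝ) 1) ≤ volume (Set.Ico (0:ℝ) t) :=
          measure_mono hB
      _ = ENNReal.ofReal t := by rw [Real.volume_Ico]; ring_nf
  rw [hF] at h2
  have := le_trans h1 h2
  rw [ENNReal.ofReal_le_ofReal_iff ht] at this
  exact absurd (lt_of_lt_of_le htt' this) (lt_irrefl t)

lemma key_countable (q r : ℝ → ℝ)
    (hq : ∀ s t : ℝ, 0 ≤ s → s ≤ t → t < 1 → q s ≤ q t)
    (hr : ∀ s t : ℝ, 0 ≤ s → s ≤ t → t < 1 → r s ≤ r t)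
    (hF : ∀ x : ℝ, volume ({s | q s ≤ x} ∩ Set.Ico (0:ℝ) 1)
        = volume ({s | r s ≤ x} ∩ Set.Ico (0:ℝ) 1)) :
    Set.Countable {t ∈ Set.Ico (0:ℝ) 1 | q t < r t} := by
  set S := {t ∈ Set.Ico (0:ℝ) 1 | q t < r t} with hS
  have hch : ∀ t ∈ S, ∃ a : ℚ, q t < (a : ℝ) ∧ (a : ℝ) < r t := by
    intro t ht
    exact exists_rat_btwn ht.2
  choose f hf1 hf2 using hch
  have : Set.InjOn (fun t : ℝ => if h : t ∈ S then f t h else 0) S := by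
    intro t1 h1 t2 h2 he
    simp only [dif_pos h1, dif_pos h2] at he
    by_contra hne
    rcases lt_or_gt_of_ne hne with hlt | hlt
    · -- t1 < t2 : r t1 ≤ q t2
      have h3 : r t1 ≤ q t2 := key_le r q hr hq (fun x => (hF x).symm) h1.1.1 hlt h2.1.2
      have := lt_trans (hf2 t1 h1) (lt_of_le_of_lt h3 (hf1 t2 h2))
      rw [he] at this
      exact lt_irrefl _ this
    · have h3 : r t2 ≤ q t1 := key_le r q hr hq (fun x => (hF x).symm) h2.1.1 hlt h1.1.2
      have := lt_trans (hf2 t2 h2) (lt_of_le_of_lt h3 (hf1 t1 h1))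
      rw [he] at this
      exact lt_irrefl _ this
  exact Set.countable_of_injective_of_countable_image this
    (Set.to_countable _)

lemma key_ae (q r : ℝ → ℝ)
    (hq : ∀ s t : ℝ, 0 ≤ s → s ≤ t → t < 1 → q s ≤ q t)
    (hr : ∀ s t : ℝ, 0 ≤ s → s ≤ t → t < 1 → r s ≤ r t)
    (hF : ∀ x : ℝ, volume ({s | q s ≤ x} ∩ Set.Ico (0:ℝ) 1)
        = volume ({s | r s ≤ x} ∩ Set.Ico (0:ℝ) 1)) :
    ∀ᵐ t ∂(volume.restrict (Set.Ico (0:ℝ) 1)), q t = r t := by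
  rw [ae_restrict_iff' measurableSet_Ico, ae_iff]
  have hcnt : Set.Countable ({t ∈ Set.Ico (0:ℝ) 1 | q t < r t}
      ∪ {t ∈ Set.Ico (0:ℝ) 1 | r t < q t}) :=
    (key_countable q r hq hr hF).union
      (key_countable r q hr hq (fun x => (hF x).symm))
  refine measure_mono_null ?_ (hcnt.measure_zero volume)
  intro t ht
  simp only [Set.mem_setOf_eq, not_forall] at ht
  push_neg at ht
  rcases lt_or_gt_of_ne ht.2 with h | h
  · exact Or.inl ⟨ht.1, h⟩
  · exact Or.inr ⟨ht.1, h⟩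

/-- two monotone probability measures on `ℝ_+^D` coincide if and only if all
their one-dimensional marginals coincide. -/
theorem monotoneMeasure_eq_iff_marginals (D : ℕ) (hD : 1 ≤ D)
    (μ ν : Measure (EuclideanSpace ℝ (Fin D)))
    (hμ : IsMonotoneMeasure D μ) (hν : IsMonotoneMeasure D ν) :
    μ = ν ↔ ∀ d : Fin D,
      μ.map (fun x : EuclideanSpace ℝ (Fin D) => x d)
        = ν.map (fun x : EuclideanSpace ℝ (Fin D) => x d) := by
  constructor
  · intro h d; rw [h]
  · intro h
    obtain ⟨q, hqm, -, hqmono, hμeq⟩ := hμ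
    obtain ⟨r, hrm, -, hrmono, hνeq⟩ := hν
    have heval : ∀ d : Fin D, Measurable (fun x : EuclideanSpace ℝ (Fin D) => x d) :=
      fun d => ((continuous_apply d).comp (PiLp.continuous_ofLp 2 _)).measurable
    have hqd : ∀ d : Fin D, AEMeasurable (fun s => q s d)
        (volume.restrict (Set.Ico (0:ℝ) 1)) :=
      fun d => (heval d).comp_aemeasurable hqm
    have hrd : ∀ d : Fin D, AEMeasurable (fun s => r s d)
        (volume.restrict (Set.Ico (0:ℝ) 1)) :=
      fun d => (heval d).comp_aemeasurable hrm
    have hmap : ∀ d : Fin D,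
        Measure.map (fun s => q s d) (volume.restrict (Set.Ico (0:ℝ) 1))
          = Measure.map (fun s => r s d) (volume.restrict (Set.Ico (0:ℝ) 1)) := by
      intro d
      have h1 := h d
      rw [hμeq, hνeq,
        AEMeasurable.map_map_of_aemeasurable ((heval d).aemeasurable) hqm,
        AEMeasurable.map_map_of_aemeasurable ((heval d).aemeasurable) hrm] at h1
      simpa [Function.comp_def] using h1
    have hF : ∀ d : Fin D, ∀ x : ℝ,
        volume ({s | q s d ≤ x} ∩ Set.Ico (0:ℝ) 1)
          = volume ({s | r s d ≤ x} ∩ Set.Ico (0:ℝ) 1) := by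
      intro d x
      have h1 := congrArg (fun m : Measure ℝ => m (Set.Iic x)) (hmap d)
      simp only at h1
      rw [Measure.map_apply_of_aemeasurable (hqd d) measurableSet_Iic,
        Measure.map_apply_of_aemeasurable (hrd d) measurableSet_Iic,
        Measure.restrict_apply' measurableSet_Ico,
        Measure.restrict_apply' measurableSet_Ico] at h1
      exact h1
    have hae : ∀ᵐ s ∂(volume.restrict (Set.Ico (0:ℝ) 1)), q s = r s := by
      have : ∀ᵐ s ∂(volume.restrict (Set.Ico (0:ℝ) 1)), ∀ d : Fin D, q s d = r s d := by
        rw [MeasureTheory.ae_all_iff]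
        intro d
        exact key_ae (fun s => q s d) (fun s => r s d)
          (fun s t hs hst ht => hqmono s t hs hst ht d)
          (fun s t hs hst ht => hrmono s t hs hst ht d)
          (hF d)
      filter_upwards [this] with s hs
      exact PiLp.ext hs
    rw [hμeq, hνeq, Measure.map_congr hae]
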